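/- Let ε ≥ 0, c ≥ 0, let v be a value of the matrix game certified by optimal strategies, and let â be observed payoffs making (i, j, â) a repeated game with error cε. If limsup_{t→∞} r̂₁(t) ≤ ε and limsup_{t→∞} r̂₂(t) ≤ ε, then v − (c+1)ε ≤ liminf_{t→∞} ĝ(t) and limsup_{t→∞} ĝ(t) ≤ v + (c+1)ε. (Proposition 6, inequalities (6).) -/

import Mathlib

open Finset Filter

/-- **Proposition 6, inequalities (6).**  In a repeated game with error `cε` (observed
payoffs `â` eventually within `cε` of the exact payoffs `a`), if both players' observed
average regrets have `limsup ≤ ε`, then the observed average payoff `ĝ(t)` eventually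
lies in `[v − (c+1)ε, v + (c+1)ε]`, where `v` is the value of the exact matrix game. -/
theorem stmt_4 {A B : Type*} [Fintype A] [Fintype B] [Nonempty A] [Nonempty B]
    (a : A → B → ℝ) (ha : ∀ i j, a i j ∈ Set.Icc (0 : ℝ) 1)
    (ε c : ℝ) (hε : 0 ≤ ε) (hc : 0 ≤ c) (v : ℝ)
    (pstar : A → ℝ) (hp0 : ∀ i, 0 ≤ pstar i) (hp1 : ∑ i, pstar i = 1)
    (qstar : B → ℝ) (hq0 : ∀ j, 0 ≤ qstar j) (hq1 : ∑ j, qstar j = 1)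
    (hpv : ∀ j, v ≤ ∑ i, pstar i * a i j)
    (hqv : ∀ i, ∑ j, qstar j * a i j ≤ v)
    (i : ℕ → A) (j : ℕ → B)
    (ahat : ℕ → A → B → ℝ)
    (hahat01 : ∀ s i₀ j₀, ahat s i₀ j₀ ∈ Set.Icc (0 : ℝ) 1)
    (herr : ∃ t₀ : ℕ, ∀ s ≥ t₀, ∀ i₀ j₀, |ahat s i₀ j₀ - a i₀ j₀| ≤ c * ε)
    (ghat r₁ r₂ : ℕ → ℝ)
    (hg : ∀ t, ghat t = (∑ s ∈ Finset.Icc 1 t, ahat s (i s) (j s)) / t)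
    (hr₁ : ∀ t, r₁ t =
      ((univ.sup' univ_nonempty fun i₀ => ∑ s ∈ Finset.Icc 1 t, ahat s i₀ (j s))
        - ∑ s ∈ Finset.Icc 1 t, ahat s (i s) (j s)) / t)
    (hr₂ : ∀ t, r₂ t =
      ((∑ s ∈ Finset.Icc 1 t, ahat s (i s) (j s))
        - univ.inf' univ_nonempty fun j₀ => ∑ s ∈ Finset.Icc 1 t, ahat s (i s) j₀) / t)
    (h1 : limsup r₁ atTop ≤ ε)
    (h2 : limsup r₂ atTop ≤ ε) :
    v - (c + 1) * ε ≤ liminf ghat atTop ∧ limsup ghat atTop ≤ v + (c + 1) * ε := by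
  obtain ⟨t₀, ht₀⟩ := herr
  classical
  -- error bound valid for all s
  set e : ℕ → ℝ := fun s => if s < t₀ then 1 else 0 with he
  have he0 : ∀ s, 0 ≤ e s := fun s => by simp only [he]; split <;> norm_num
  have habs : ∀ s i₀ j₀, |ahat s i₀ j₀ - a i₀ j₀| ≤ c * ε + e s := by
    intro s i₀ j₀
    by_cases hs : s < t₀
    · have h1 := (hahat01 s i₀ j₀).1; have h2 := (hahat01 s i₀ j₀).2
      have h3 := (ha i₀ j₀).1; have h4 := (ha i₀ j₀).2
      have : |ahat s i₀ j₀ - a i₀ j₀| ≤ 1 := by rw [abs_le]; constructor <;> nlinarith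
      have hcε : 0 ≤ c * ε := mul_nonneg hc hε
      simp only [he, if_pos hs]; linarith
    · have := ht₀ s (not_lt.mp hs) i₀ j₀
      simp only [he, if_neg hs]; linarith
  have hesum : ∀ t, ∑ s ∈ Finset.Icc 1 t, e s ≤ (t₀ : ℝ) := by
    intro t
    have : ∑ s ∈ Finset.Icc 1 t, e s = (((Finset.Icc 1 t).filter fun s => s < t₀).card : ℝ) := by
      simp only [he]; exact Finset.sum_boole _ _
    rw [this]
    have hsub : ((Finset.Icc 1 t).filter fun s => s < t₀) ⊆ Finset.range t₀ := by
      intro x hx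
      simp only [Finset.mem_filter] at hx
      exact Finset.mem_range.2 hx.2
    have := Finset.card_le_card hsub
    rw [Finset.card_range] at this
    exact_mod_cast this
  have hcard : ∀ t : ℕ, (Finset.Icc 1 t).card = t := fun t => by
    rw [Nat.card_Icc]; omega
  -- bounds on S
  have hS0 : ∀ t, (0:ℝ) ≤ ∑ s ∈ Finset.Icc 1 t, ahat s (i s) (j s) := fun t =>
    Finset.sum_nonneg fun s _ => (hahat01 s _ _).1
  have hS1 : ∀ t, ∑ s ∈ Finset.Icc 1 t, ahat s (i s) (j s) ≤ (t:ℝ) := by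
    intro t
    calc ∑ s ∈ Finset.Icc 1 t, ahat s (i s) (j s) ≤ ∑ s ∈ Finset.Icc 1 t, (1:ℝ) :=
          Finset.sum_le_sum fun s _ => (hahat01 s _ _).2
      _ = (t:ℝ) := by rw [Finset.sum_const, hcard]; simp
  -- inf' bound: inf' ≤ t*(v + cε) + t₀
  have hinf : ∀ t : ℕ,
      (univ.inf' univ_nonempty fun j₀ => ∑ s ∈ Finset.Icc 1 t, ahat s (i s) j₀)
        ≤ (t:ℝ) * (v + c * ε) + t₀ := by
    intro t
    have step1 : (univ.inf' univ_nonempty fun j₀ => ∑ s ∈ Finset.Icc 1 t, ahat s (i s) j₀)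
        ≤ ∑ j₀, qstar j₀ * ∑ s ∈ Finset.Icc 1 t, ahat s (i s) j₀ := by
      have : (univ.inf' univ_nonempty fun j₀ => ∑ s ∈ Finset.Icc 1 t, ahat s (i s) j₀)
          = ∑ j₀, qstar j₀ * (univ.inf' univ_nonempty fun j₀ => ∑ s ∈ Finset.Icc 1 t, ahat s (i s) j₀) := by
        rw [← Finset.sum_mul, hq1, one_mul]
      rw [this]
      apply Finset.sum_le_sum
      intro j₀ _
      exact mul_le_mul_of_nonneg_left (Finset.inf'_le _ (Finset.mem_univ j₀)) (hq0 j₀)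
    have step2 : ∑ j₀, qstar j₀ * ∑ s ∈ Finset.Icc 1 t, ahat s (i s) j₀
        = ∑ s ∈ Finset.Icc 1 t, ∑ j₀, qstar j₀ * ahat s (i s) j₀ := by
      rw [Finset.sum_comm]
      congr 1; ext j₀; rw [Finset.mul_sum]
    have step3 : ∀ s, ∑ j₀, qstar j₀ * ahat s (i s) j₀ ≤ v + c * ε + e s := by
      intro s
      calc ∑ j₀, qstar j₀ * ahat s (i s) j₀
          ≤ ∑ j₀, qstar j₀ * (a (i s) j₀ + (c * ε + e s)) := by
            apply Finset.sum_le_sum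
            intro j₀ _
            apply mul_le_mul_of_nonneg_left _ (hq0 j₀)
            have := habs s (i s) j₀
            rw [abs_le] at this; linarith [this.2]
        _ = (∑ j₀, qstar j₀ * a (i s) j₀) + (c * ε + e s) * ∑ j₀, qstar j₀ := by
            rw [Finset.mul_sum, ← Finset.sum_add_distrib]
            exact Finset.sum_congr rfl fun j₀ _ => by ring
        _ ≤ v + c * ε + e s := by rw [hq1, mul_one]; linarith [hqv (i s)]
    calc (univ.inf' univ_nonempty fun j₀ => ∑ s ∈ Finset.Icc 1 t, ahat s (i s) j₀)
        ≤ ∑ s ∈ Finset.Icc 1 t, ∑ j₀, qstar j₀ * ahat s (i s) j₀ := by rw [← step2]; exact step1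
      _ ≤ ∑ s ∈ Finset.Icc 1 t, (v + c * ε + e s) := Finset.sum_le_sum fun s _ => step3 s
      _ = (t:ℝ) * (v + c * ε) + ∑ s ∈ Finset.Icc 1 t, e s := by
          rw [Finset.sum_add_distrib, Finset.sum_const, hcard, nsmul_eq_mul]
      _ ≤ (t:ℝ) * (v + c * ε) + t₀ := by linarith [hesum t]
  -- sup' bound: sup' ≥ t*(v - cε) - t₀
  have hsup : ∀ t : ℕ,
      (t:ℝ) * (v - c * ε) - t₀
        ≤ (univ.sup' univ_nonempty fun i₀ => ∑ s ∈ Finset.Icc 1 t, ahat s i₀ (j s)) := by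
    intro t
    have step1 : ∑ i₀, pstar i₀ * ∑ s ∈ Finset.Icc 1 t, ahat s i₀ (j s)
        ≤ (univ.sup' univ_nonempty fun i₀ => ∑ s ∈ Finset.Icc 1 t, ahat s i₀ (j s)) := by
      have : (univ.sup' univ_nonempty fun i₀ => ∑ s ∈ Finset.Icc 1 t, ahat s i₀ (j s))
          = ∑ i₀, pstar i₀ * (univ.sup' univ_nonempty fun i₀ => ∑ s ∈ Finset.Icc 1 t, ahat s i₀ (j s)) := by
        rw [← Finset.sum_mul, hp1, one_mul]
      rw [this]
      apply Finset.sum_le_sum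
      intro i₀ _
      exact mul_le_mul_of_nonneg_left
        (Finset.le_sup' (fun i₀ => ∑ s ∈ Finset.Icc 1 t, ahat s i₀ (j s)) (Finset.mem_univ i₀))
        (hp0 i₀)
    have step2 : ∑ i₀, pstar i₀ * ∑ s ∈ Finset.Icc 1 t, ahat s i₀ (j s)
        = ∑ s ∈ Finset.Icc 1 t, ∑ i₀, pstar i₀ * ahat s i₀ (j s) := by
      rw [Finset.sum_comm]
      congr 1; ext i₀; rw [Finset.mul_sum]
    have step3 : ∀ s, v - c * ε - e s ≤ ∑ i₀, pstar i₀ * ahat s i₀ (j s) := by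
      intro s
      calc v - c * ε - e s ≤ (∑ i₀, pstar i₀ * a i₀ (j s)) - (c * ε + e s) := by
            linarith [hpv (j s)]
        _ = ∑ i₀, pstar i₀ * (a i₀ (j s) - (c * ε + e s)) := by
            have hconst : ∑ i₀, pstar i₀ * (c * ε + e s) = c * ε + e s := by
              rw [← Finset.sum_mul, hp1, one_mul]
            simp only [mul_sub]
            rw [Finset.sum_sub_distrib, hconst]
        _ ≤ ∑ i₀, pstar i₀ * ahat s i₀ (j s) := by
            apply Finset.sum_le_sum
            intro i₀ _
            apply mul_le_mul_of_nonneg_left _ (hp0 i₀)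
            have := habs s i₀ (j s)
            rw [abs_le] at this; linarith [this.1]
    calc (t:ℝ) * (v - c * ε) - t₀
        ≤ ∑ s ∈ Finset.Icc 1 t, (v - c * ε - e s) := by
          rw [Finset.sum_sub_distrib, Finset.sum_const, hcard, nsmul_eq_mul]
          linarith [hesum t]
      _ ≤ ∑ s ∈ Finset.Icc 1 t, ∑ i₀, pstar i₀ * ahat s i₀ (j s) :=
          Finset.sum_le_sum fun s _ => step3 s
      _ ≤ _ := by rw [← step2]; exact step1
  -- boundedness facts
  have hr₂bdd : IsBoundedUnder (· ≤ ·) atTop r₂ := by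
    refine ⟨1, eventually_map.mpr ?_⟩
    filter_upwards [eventually_ge_atTop 1] with t ht
    rw [hr₂ t]
    have htpos : (0:ℝ) < t := by exact_mod_cast Nat.lt_of_lt_of_le Nat.zero_lt_one ht
    rw [div_le_one htpos]
    have hinf0 : (0:ℝ) ≤ univ.inf' univ_nonempty fun j₀ => ∑ s ∈ Finset.Icc 1 t, ahat s (i s) j₀ := by
      apply Finset.le_inf'
      intro j₀ _
      exact Finset.sum_nonneg fun s _ => (hahat01 s _ _).1
    linarith [hS1 t]
  have hr₁bdd : IsBoundedUnder (· ≤ ·) atTop r₁ := by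
    refine ⟨1, eventually_map.mpr ?_⟩
    filter_upwards [eventually_ge_atTop 1] with t ht
    rw [hr₁ t]
    have htpos : (0:ℝ) < t := by exact_mod_cast Nat.lt_of_lt_of_le Nat.zero_lt_one ht
    rw [div_le_one htpos]
    have hsup1 : (univ.sup' univ_nonempty fun i₀ => ∑ s ∈ Finset.Icc 1 t, ahat s i₀ (j s)) ≤ (t:ℝ) := by
      apply Finset.sup'_le
      intro i₀ _
      calc ∑ s ∈ Finset.Icc 1 t, ahat s i₀ (j s) ≤ ∑ s ∈ Finset.Icc 1 t, (1:ℝ) :=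
            Finset.sum_le_sum fun s _ => (hahat01 s _ _).2
        _ = (t:ℝ) := by rw [Finset.sum_const, hcard]; simp
    linarith [hS0 t]
  have hgnonneg : ∀ t, 0 ≤ ghat t := by
    intro t
    rw [hg t]
    exact div_nonneg (hS0 t) (Nat.cast_nonneg t)
  have hgcobdd : IsCoboundedUnder (· ≤ ·) atTop ghat :=
    IsBoundedUnder.isCoboundedUnder_le ⟨0, eventually_map.mpr (Eventually.of_forall fun t => hgnonneg t)⟩
  have hgbdd : IsBoundedUnder (· ≤ ·) atTop ghat := by
    refine ⟨1, eventually_map.mpr ?_⟩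
    filter_upwards [eventually_ge_atTop 1] with t ht
    have htpos : (0:ℝ) < t := by exact_mod_cast Nat.lt_of_lt_of_le Nat.zero_lt_one ht
    rw [hg t, div_le_one htpos]
    exact hS1 t
  have hgcobdd' : IsCoboundedUnder (· ≥ ·) atTop ghat :=
    IsBoundedUnder.isCoboundedUnder_ge hgbdd
  -- eventually t₀/t ≤ δ
  have hdiv : ∀ δ : ℝ, 0 < δ → ∀ᶠ t : ℕ in atTop, (t₀:ℝ) / t ≤ δ := by
    intro δ hδ
    have := (tendsto_const_div_atTop_nhds_zero_nat (t₀:ℝ)).eventually (gt_mem_nhds hδ)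
    filter_upwards [this] with t ht using le_of_lt ht
  constructor
  · -- lower bound
    apply le_of_forall_pos_le_add
    intro δ hδ
    have hev1 : ∀ᶠ t in atTop, r₁ t < ε + δ / 2 :=
      eventually_lt_of_limsup_lt (lt_of_le_of_lt h1 (by linarith)) hr₁bdd
    have hev2 := hdiv (δ/2) (by linarith)
    rw [show v - (c+1)*ε = (v - (c+1)*ε - δ) + δ by ring]
    gcongr
    apply le_liminf_of_le hgcobdd'
    filter_upwards [hev1, hev2, eventually_ge_atTop 1] with t h₁ h₂ ht
    have htpos : (0:ℝ) < t := by exact_mod_cast Nat.lt_of_lt_of_le Nat.zero_lt_one ht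
    have hgeq : ghat t = (univ.sup' univ_nonempty fun i₀ => ∑ s ∈ Finset.Icc 1 t, ahat s i₀ (j s)) / t - r₁ t := by
      rw [hg t, hr₁ t, ← sub_div, sub_sub_cancel]
    rw [hgeq]
    have : (t:ℝ) * (v - c * ε) / t - (t₀:ℝ)/t ≤ (univ.sup' univ_nonempty fun i₀ => ∑ s ∈ Finset.Icc 1 t, ahat s i₀ (j s)) / t := by
      rw [← sub_div]
      exact div_le_div_of_nonneg_right (hsup t) htpos.le
    have heq : (t:ℝ) * (v - c * ε) / t = v - c * ε := by
      field_simp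
    rw [heq] at this
    linarith
  · -- upper bound
    apply le_of_forall_pos_le_add
    intro δ hδ
    have hev1 : ∀ᶠ t in atTop, r₂ t < ε + δ / 2 :=
      eventually_lt_of_limsup_lt (lt_of_le_of_lt h2 (by linarith)) hr₂bdd
    have hev2 := hdiv (δ/2) (by linarith)
    apply limsup_le_of_le hgcobdd
    filter_upwards [hev1, hev2, eventually_ge_atTop 1] with t h₁ h₂ ht
    have htpos : (0:ℝ) < t := by exact_mod_cast Nat.lt_of_lt_of_le Nat.zero_lt_one ht
    have hgeq : ghat t = r₂ t + (univ.inf' univ_nonempty fun j₀ => ∑ s ∈ Finset.Icc 1 t, ahat s (i s) j₀) / t := by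
      rw [hg t, hr₂ t, ← add_div, sub_add_cancel]
    rw [hgeq]
    have : (univ.inf' univ_nonempty fun j₀ => ∑ s ∈ Finset.Icc 1 t, ahat s (i s) j₀) / t
        ≤ (t:ℝ) * (v + c * ε) / t + (t₀:ℝ)/t := by
      rw [← add_div]
      exact div_le_div_of_nonneg_right (hinf t) htpos.le
    have heq : (t:ℝ) * (v + c * ε) / t = v + c * ε := by field_simp
    rw [heq] at this
    linarith
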